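/- The minimal DFA of the language K = (↑a↑b↑c)* + A*⊤A* over A = P({a,b,c}) is counter-free: there are no word u, distinct states p ≠ q, and integer k ≥ 1 such that reading u sends p to q and reading u^k sends q to p. Consequently K is FO-definable. -/

import Mathlib

/-- The powerset alphabet `𝒫({a,b,c})`, ordered by inclusion. -/
abbrev AB : Type := Finset (Fin 3)

def la : AB := {0}
def lb : AB := {1}
def lc : AB := {2}
def top3 : AB := Finset.univ

/-- Words in `(↑a ↑b ↑c)*` : concatenations of three-letter blocks whose
letters contain `a`, `b`, `c` respectively. -/
inductive KBlocks : List AB → Prop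
  | nil : KBlocks []
  | cons {s t r : AB} {w : List AB} :
      (0 : Fin 3) ∈ s → (1 : Fin 3) ∈ t → (2 : Fin 3) ∈ r →
      KBlocks w → KBlocks (s :: t :: r :: w)

/-- The language `K = (↑a ↑b ↑c)* + A* ⊤ A*`. -/
def K : Set (List AB) := {u | KBlocks u ∨ top3 ∈ u}
/-- Syntax of full first-order logic on words (with negation and exact
letter predicates). -/
inductive FOf (A : Type) where
  | letter (a : A) (x : ℕ)
  | le (x y : ℕ)
  | lt (x y : ℕ)
  | not (φ : FOf A)
  | and (φ ψ : FOf A)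
  | or (φ ψ : FOf A)
  | ex (x : ℕ) (φ : FOf A)
  | all (x : ℕ) (φ : FOf A)

/-- Semantics of `FOf` formulas on words. -/
def FOf.Sat {A : Type} (u : List A) (α : ℕ → ℕ) : FOf A → Prop
  | letter a x => u[α x]? = some a
  | le x y => α x ≤ α y
  | lt x y => α x < α y
  | not φ => ¬ FOf.Sat u α φ
  | and φ ψ => FOf.Sat u α φ ∧ FOf.Sat u α ψ
  | or φ ψ => FOf.Sat u α φ ∨ FOf.Sat u α ψ
  | ex x φ => ∃ i, i < u.length ∧ FOf.Sat u (Function.update α x i) φ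
  | all x φ => ∀ i, i < u.length → FOf.Sat u (Function.update α x i) φ

/-- Free variables. -/
def FOf.fv {A : Type} : FOf A → Finset ℕ
  | letter _ x => {x}
  | le x y => {x, y}
  | lt x y => {x, y}
  | not φ => φ.fv
  | and φ ψ => φ.fv ∪ ψ.fv
  | or φ ψ => φ.fv ∪ ψ.fv
  | ex x φ => φ.fv.erase x
  | all x φ => φ.fv.erase x

/-- A language is FO-definable if it is the set of words satisfying some
FO sentence. -/
def FODefinable {A : Type} (L : Set (List A)) : Prop :=
  ∃ φ : FOf A, φ.fv = ∅ ∧ L = {u | FOf.Sat u (fun _ => 0) φ}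

/-- States of the minimal DFA of `K`. -/
inductive St where
  | qa | qb | qc | qtop | bot
  deriving DecidableEq

/-- Transition function of the minimal DFA of `K`. -/
def dfaStep (p : St) (s : AB) : St :=
  match p with
  | St.qa => if s = top3 then St.qtop else if (0 : Fin 3) ∈ s then St.qb else St.bot
  | St.qb => if s = top3 then St.qtop else if (1 : Fin 3) ∈ s then St.qc else St.bot
  | St.qc => if s = top3 then St.qtop else if (2 : Fin 3) ∈ s then St.qa else St.bot
  | St.qtop => St.qtop
  | St.bot => if s = top3 then St.qtop else St.bot

/-- Running the DFA on a word. -/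
def dfaRun (p : St) (u : List AB) : St := u.foldl dfaStep p

/-- `u^k`. -/
def wpow (u : List AB) (k : ℕ) : List AB := (List.replicate k u).flatten

/-- the minimal DFA of `K` (initial state `q_a`, accepting
states `q_a` and `q_⊤`) recognizes `K` and is counter-free: no word induces a
non-trivial cycle on states. Consequently, `K` is FO-definable. -/
-- ====== auxiliary development ======

def ph (i : ℕ) : Fin 3 := ⟨i % 3, by omega⟩

lemma ph_zero : ph 0 = 0 := rfl
lemma ph_succ (i : ℕ) : ph (i+1) = ph i + 1 := by
  apply Fin.ext
  show (i+1) % 3 = ((i % 3) + (1 % 3)) % 3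
  omega

lemma ph_add (a b : ℕ) : ph (a + b) = ph a + ph b := by
  apply Fin.ext
  show (a+b) % 3 = ((a % 3) + (b % 3)) % 3
  omega

def stOf (i : ℕ) : St := if i % 3 = 0 then St.qa else if i % 3 = 1 then St.qb else St.qc

def Cyc (p : St) : Prop := p = St.qa ∨ p = St.qb ∨ p = St.qc

lemma run_nil (p : St) : dfaRun p [] = p := rfl
lemma run_cons (p : St) (s : AB) (w : List AB) :
    dfaRun p (s :: w) = dfaRun (dfaStep p s) w := rfl
lemma run_append (p : St) (a b : List AB) :
    dfaRun p (a ++ b) = dfaRun (dfaRun p a) b := List.foldl_append ..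

lemma run_qtop : ∀ u : List AB, dfaRun St.qtop u = St.qtop
  | [] => rfl
  | s :: w => by rw [run_cons]; exact run_qtop w

lemma run_bot : ∀ u : List AB, dfaRun St.bot u = St.bot ∨ dfaRun St.bot u = St.qtop
  | [] => Or.inl rfl
  | s :: w => by
      rw [run_cons]
      by_cases h : s = top3
      · simp [dfaStep, h, run_qtop]
      · simp [dfaStep, h]; exact run_bot w

lemma step_top (p : St) : dfaStep p top3 = St.qtop := by cases p <;> simp [dfaStep]

lemma run_top_mem : ∀ (u : List AB), top3 ∈ u → ∀ p, dfaRun p u = St.qtop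
  | s :: w, h, p => by
      rw [run_cons]
      rcases List.mem_cons.1 h with h | h
      · rw [← h, step_top]; exact run_qtop w
      · exact run_top_mem w h _

lemma stOf_zero : stOf 0 = St.qa := rfl

lemma step_stOf (n : ℕ) (s : AB) (hs : s ≠ top3) :
    dfaStep (stOf n) s = if ph n ∈ s then stOf (n+1) else St.bot := by
  have h3 : n % 3 = 0 ∨ n % 3 = 1 ∨ n % 3 = 2 := by omega
  rcases h3 with h | h | h
  · have h1 : (n+1) % 3 = 1 := by omega
    have hp : ph n = 0 := Fin.ext (by simpa [ph] using h)
    simp [stOf, dfaStep, h, h1, hs, hp]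
  · have h1 : (n+1) % 3 = 2 := by omega
    have hp : ph n = 1 := Fin.ext (by simpa [ph] using h)
    simp [stOf, dfaStep, h, h1, hs, hp]
  · have h1 : (n+1) % 3 = 0 := by omega
    have hp : ph n = 2 := Fin.ext (by simpa [ph] using h)
    simp [stOf, dfaStep, h, h1, hs, hp]

lemma cyc_not_qtop : ¬ Cyc St.qtop := by simp [Cyc]
lemma cyc_not_bot : ¬ Cyc St.bot := by simp [Cyc]
lemma stOf_cyc (n : ℕ) : Cyc (stOf n) := by
  unfold stOf Cyc; split
  · exact Or.inl rfl
  · split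
    · exact Or.inr (Or.inl rfl)
    · exact Or.inr (Or.inr rfl)

lemma cyc_cases {p : St} (h : Cyc p) : ∃ m, m < 3 ∧ p = stOf m := by
  rcases h with rfl | rfl | rfl
  · exact ⟨0, by omega, rfl⟩
  · exact ⟨1, by omega, rfl⟩
  · exact ⟨2, by omega, rfl⟩

lemma stOf_eq_iff (a b : ℕ) : stOf a = stOf b ↔ a % 3 = b % 3 := by
  have ha : a % 3 = 0 ∨ a % 3 = 1 ∨ a % 3 = 2 := by omega
  have hb : b % 3 = 0 ∨ b % 3 = 1 ∨ b % 3 = 2 := by omega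
  rcases ha with h | h | h <;> rcases hb with h' | h' | h' <;> simp [stOf, h, h'] <;> omega

lemma run_alive : ∀ (u : List AB) (n : ℕ),
    (∀ i (hi : i < u.length), ph (n+i) ∈ u[i] ∧ u[i] ≠ top3) →
    dfaRun (stOf n) u = stOf (n + u.length)
  | [], n, _ => by simp [run_nil]
  | s :: w, n, h => by
      have h0 := h 0 (by simp)
      simp only [List.getElem_cons_zero] at h0
      rw [run_cons, step_stOf n s h0.2, if_pos (by simpa using h0.1)]
      have := run_alive w (n+1) (fun i hi => by
        have := h (i+1) (by simpa using Nat.succ_lt_succ hi)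
        simpa [Nat.add_assoc, Nat.add_comm 1 i] using this)
      rw [this]
      congr 1
      simp; omega

lemma run_cyc_strong : ∀ (u : List AB) (n : ℕ), Cyc (dfaRun (stOf n) u) →
    dfaRun (stOf n) u = stOf (n + u.length) ∧
      ∀ i (hi : i < u.length), ph (n+i) ∈ u[i] ∧ u[i] ≠ top3
  | [], n, _ => ⟨by simp [run_nil], by simp⟩
  | s :: w, n, hcyc => by
      rw [run_cons] at hcyc
      by_cases hs : s = top3
      · rw [hs, step_top, run_qtop] at hcyc; exact absurd hcyc cyc_not_qtop
      rw [step_stOf n s hs] at hcyc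
      by_cases hm : ph n ∈ s
      · rw [if_pos hm] at hcyc
        obtain ⟨h1, h2⟩ := run_cyc_strong w (n+1) hcyc
        constructor
        · rw [run_cons, step_stOf n s hs, if_pos hm, h1]
          congr 1; simp; omega
        · intro i hi
          match i with
          | 0 => simpa using ⟨hm, hs⟩
          | (j+1) =>
            have := h2 j (by simpa using Nat.lt_of_succ_lt_succ hi)
            simpa [Nat.add_assoc, Nat.add_comm 1 j] using this
      · rw [if_neg hm] at hcyc
        rcases run_bot w with h | h <;> rw [h] at hcyc
        · exact absurd hcyc cyc_not_bot
        · exact absurd hcyc cyc_not_qtop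

lemma cyc_of_run (r : St) (w : List AB) (h : Cyc (dfaRun r w)) : Cyc r := by
  cases r
  · exact Or.inl rfl
  · exact Or.inr (Or.inl rfl)
  · exact Or.inr (Or.inr rfl)
  · rw [run_qtop] at h; exact absurd h cyc_not_qtop
  · rcases run_bot w with h' | h' <;> rw [h'] at h
    · exact absurd h cyc_not_bot
    · exact absurd h cyc_not_qtop

-- KBlocks characterization
lemma kblocks_alive {u : List AB} (h : KBlocks u) :
    (∀ i (hi : i < u.length), ph i ∈ u[i]) ∧ u.length % 3 = 0 := by
  induction h with
  | nil => exact ⟨by simp, rfl⟩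
  | @cons s t r w h0 h1 h2 hw ih =>
      refine ⟨?_, by simp [Nat.add_mod, ih.2]⟩
      intro i hi
      match i with
      | 0 => simpa [ph_zero] using h0
      | 1 => simpa [show ph 1 = 1 from rfl] using h1
      | 2 => simpa [show ph 2 = 2 from rfl] using h2
      | (j+3) =>
        have hj : j < w.length := by simp at hi; omega
        have := ih.1 j hj
        have hph : ph (j+3) = ph j := Fin.ext (by show (j+3) % 3 = j % 3; omega)
        simpa [hph] using this

lemma kblocks_of : ∀ (u : List AB),
    (∀ i (hi : i < u.length), ph i ∈ u[i]) → u.length % 3 = 0 → KBlocks u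
  | [], _, _ => KBlocks.nil
  | [s], _, h2 => by simp at h2
  | [s, t], _, h2 => by simp at h2
  | s :: t :: r :: w, h1, h2 => by
      refine KBlocks.cons ?_ ?_ ?_ (kblocks_of w ?_ ?_)
      · exact h1 0 (by simp)
      · exact h1 1 (by simp)
      · exact h1 2 (by simp)
      · intro i hi
        have := h1 (i+3) (by simp; omega)
        have hph : ph (i+3) = ph i := Fin.ext (by show (i+3) % 3 = i % 3; omega)
        simpa [hph] using this
      · simp at h2 ⊢; omega

lemma kblocks_iff (u : List AB) :
    KBlocks u ↔ (∀ i (hi : i < u.length), ph i ∈ u[i]) ∧ u.length % 3 = 0 :=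
  ⟨kblocks_alive, fun h => kblocks_of u h.1 h.2⟩

lemma reach_top : ∀ (u : List AB) (p : St), dfaRun p u = St.qtop → p = St.qtop ∨ top3 ∈ u
  | [], p, h => Or.inl h
  | s :: w, p, h => by
      rw [run_cons] at h
      rcases reach_top w _ h with h' | h'
      · by_cases hs : s = top3
        · exact Or.inr (by simp [hs])
        · cases p <;> simp [dfaStep, hs] at h' <;> first
            | (exact Or.inl rfl)
            | (split at h' <;> simp_all)
      · exact Or.inr (List.mem_cons_of_mem _ h')

-- Part 1
lemma part1 (u : List AB) : u ∈ K ↔ (dfaRun St.qa u = St.qa ∨ dfaRun St.qa u = St.qtop) := by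
  constructor
  · rintro (hb | ht)
    · by_cases ht : top3 ∈ u
      · exact Or.inr (run_top_mem u ht _)
      · obtain ⟨h1, h2⟩ := kblocks_alive hb
        left
        have := run_alive u 0 (fun i hi => ⟨by simpa using h1 i hi,
          fun hc => ht (hc ▸ List.getElem_mem hi)⟩)
        rw [← stOf_zero, this, stOf_eq_iff]
        omega
    · exact Or.inr (run_top_mem u ht _)
  · rintro (h | h)
    · by_cases ht : top3 ∈ u
      · exact Or.inr ht
      · left
        have hcyc : Cyc (dfaRun (stOf 0) u) := by rw [stOf_zero, h]; exact Or.inl rfl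
        obtain ⟨h1, h2⟩ := run_cyc_strong u 0 hcyc
        rw [stOf_zero] at h1
        rw [h, Eq.comm, ← stOf_zero, stOf_eq_iff] at h1
        exact kblocks_of u (fun i hi => by simpa using (h2 i hi).1) (by omega)
    · rcases reach_top u _ h with h' | h'
      · simp at h'
      · exact Or.inr h'

-- Part 2
lemma wpow_succ (u : List AB) (k : ℕ) : wpow u (k+1) = u ++ wpow u k := by
  simp [wpow, List.replicate_succ]

lemma part2 : ¬ ∃ (u : List AB) (p q : St) (k : ℕ), 1 ≤ k ∧ p ≠ q ∧
    dfaRun p u = q ∧ dfaRun q (wpow u k) = p := by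
  rintro ⟨u, p, q, k, hk, hpq, h1, h2⟩
  have hcyc_or : ∀ r : St, Cyc r ∨ r = St.qtop ∨ r = St.bot := by
    intro r; cases r <;> simp [Cyc]
  rcases hcyc_or p with hcp | rfl | rfl
  · -- p cyclic
    have hcq : Cyc q := cyc_of_run _ _ (h2 ▸ hcp)
    obtain ⟨np, hnp3, rfl⟩ := cyc_cases hcp
    obtain ⟨nq, hnq3, rfl⟩ := cyc_cases hcq
    set L := u.length with hL
    have hcq' : Cyc (dfaRun (stOf np) u) := h1 ▸ hcq
    obtain ⟨E1, A1⟩ := run_cyc_strong u np hcq'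
    rw [h1] at E1
    have E1' : (np + L) % 3 = nq % 3 := (stOf_eq_iff _ _).1 E1.symm
    have hne : np % 3 ≠ nq % 3 := by
      intro h
      exact hpq ((stOf_eq_iff _ _).2 h)
    have hL0 : L % 3 ≠ 0 := by intro h; apply hne; omega
    have hLpos : 0 < L := by by_contra h; apply hL0; omega
    -- cases on k
    rcases Nat.lt_or_ge k 2 with hk2 | hk2
    · -- k = 1
      have hk1 : k = 1 := by omega
      subst hk1
      rw [wpow_succ, show wpow u 0 = [] from rfl, List.append_nil] at h2
      have hcp' : Cyc (dfaRun (stOf nq) u) := h2 ▸ hcp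
      obtain ⟨E2, _⟩ := run_cyc_strong u nq hcp'
      rw [h2] at E2
      have E2' : (nq + L) % 3 = np % 3 := (stOf_eq_iff _ _).1 E2.symm
      omega
    · -- k ≥ 2
      have hdecomp : wpow u k = u ++ (u ++ wpow u (k-2)) := by
        have h' : k = (k-2) + 1 + 1 := by omega
        conv_lhs => rw [h', wpow_succ, wpow_succ]
      rw [hdecomp, run_append, run_append] at h2
      have hc2 : Cyc (dfaRun (dfaRun (stOf nq) u) u) := cyc_of_run _ _ (h2 ▸ hcp)
      have hc1 : Cyc (dfaRun (stOf nq) u) := cyc_of_run _ _ hc2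
      obtain ⟨F1, B1⟩ := run_cyc_strong u nq hc1
      rw [F1] at hc2
      obtain ⟨F2, B2⟩ := run_cyc_strong u (nq + L) hc2
      -- first letter facts
      have hm1 := A1 0 hLpos
      have hm2 := B1 0 hLpos
      have hm3 := B2 0 hLpos
      simp only [Nat.add_zero] at hm1 hm2 hm3
      -- three distinct residues all in u[0]
      have hd1 : np % 3 ≠ (nq + L) % 3 := by omega
      have hd2 : nq % 3 ≠ (nq + L) % 3 := by omega
      apply hm1.2
      have : u[0]'hLpos = top3 := by
        apply Finset.eq_univ_iff_forall.2
        intro x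
        have hx3 : (x : ℕ) < 3 := x.isLt
        have : (x : ℕ) = np % 3 ∨ (x : ℕ) = nq % 3 ∨ (x : ℕ) = (nq + L) % 3 := by omega
        rcases this with h | h | h
        · have : x = ph np := Fin.ext (by simpa [ph] using h)
          rw [this]; exact hm1.1
        · have : x = ph nq := Fin.ext (by simpa [ph] using h)
          rw [this]; exact hm2.1
        · have : x = ph (nq + L) := Fin.ext (by simpa [ph] using h)
          rw [this]; exact hm3.1
      exact this
  · -- p = qtop
    rw [run_qtop] at h1
    exact hpq h1
  · -- p = bot
    rcases run_bot u with h | h <;> rw [h1] at h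
    · exact hpq h.symm
    · rw [h, run_qtop] at h2
      exact hpq (by rw [h, h2])

-- ====== Section: combinatorial condition for FO-definability ======

def Lt (u : List AB) (i : ℕ) : AB := u.getD i ∅

lemma Lt_eq (u : List AB) (i : ℕ) (h : i < u.length) : Lt u i = u[i] :=
  List.getD_eq_getElem u ∅ h

def Dl (m : Fin 3) : AB := {m + 1, m + 2}

def flexP (s t : AB) : Prop := ∃ m : Fin 3, s = Dl m ∧ t = Dl (m + 1)

instance (s t : AB) : Decidable (flexP s t) := by unfold flexP; infer_instance

def PinP (u : List AB) (i : ℕ) (p : Fin 3) : Prop :=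
  (i = 0 ∧ p = 0) ∨ (i = u.length - 1 ∧ p = 2) ∨
  (i + 1 < u.length ∧ ¬ flexP (Lt u i) (Lt u (i+1)) ∧ p ∈ Lt u i ∧ p + 1 ∈ Lt u (i+1)) ∨
  (1 ≤ i ∧ ¬ flexP (Lt u (i-1)) (Lt u i) ∧ p ∈ Lt u i ∧ p + 2 ∈ Lt u (i-1))

def Cond (u : List AB) : Prop :=
  (∀ i, i + 1 < u.length → ∃ p : Fin 3, p ∈ Lt u i ∧ p + 1 ∈ Lt u (i+1)) ∧
  (0 < u.length → (0 : Fin 3) ∈ Lt u 0) ∧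
  (0 < u.length → (2 : Fin 3) ∈ Lt u (u.length - 1)) ∧
  (∀ i, i < u.length → ∀ p q : Fin 3, PinP u i p → PinP u i q → p = q) ∧
  (∀ i j, i < j → j < u.length →
     (∀ k, i ≤ k → k < j → flexP (Lt u k) (Lt u (k+1))) →
     ∀ p q m1 m2 : Fin 3, PinP u i p → PinP u j q →
       Lt u i = Dl m1 → Lt u j = Dl m2 → q + m1 = p + m2)

lemma flex_step : ∀ s t : AB, flexP s t → ∀ x : Fin 3, x ∈ s → x + 1 ∈ t := by decide

lemma twopair : ∀ s t : AB, s ≠ top3 → t ≠ top3 → ∀ p q : Fin 3,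
    p ∈ s → p + 1 ∈ t → q ∈ s → q + 1 ∈ t → p = q ∨ flexP s t := by decide

lemma Dl_inj : ∀ m m' : Fin 3, Dl m = Dl m' → m = m' := by decide

lemma fin3_a (x : Fin 3) : x + 1 + 2 = x := by revert x; decide
lemma fin3_b (x : Fin 3) : x + 2 + 1 = x := by revert x; decide

lemma flexrun_dl (u : List AB) (j : ℕ) (m1 : Fin 3) (h0 : Lt u j = Dl m1) :
    ∀ d, (∀ k, j ≤ k → k < j + d → flexP (Lt u k) (Lt u (k+1))) →
    Lt u (j + d) = Dl (m1 + ph d) := by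
  intro d
  induction d with
  | zero => intro _; simpa [ph_zero] using h0
  | succ d IH =>
      intro hrun
      have hd := IH (fun k hk1 hk2 => hrun k hk1 (by omega))
      obtain ⟨m, hm1, hm2⟩ := hrun (j + d) (by omega) (by omega)
      have hm : m = m1 + ph d := Dl_inj _ _ (hm1.symm.trans hd)
      have : j + (d + 1) = (j + d) + 1 := by omega
      rw [this, hm2, hm, ph_succ, add_assoc]

lemma cond_imp (u : List AB) (htop : top3 ∉ u) (hc : Cond u) :
    (∀ i (hi : i < u.length), ph i ∈ u[i]) ∧ u.length % 3 = 0 := by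
  obtain ⟨c1, c4a, c4b, c3a, c3b⟩ := hc
  set n := u.length with hn
  have G : ∀ i, i < n → ∀ i', i' ≤ i →
      (ph i' ∈ Lt u i' ∧ (∀ p, PinP u i' p → p = ph i') ∧
        ∃ j, j ≤ i' ∧ (∃ p, PinP u j p) ∧
          (∀ k, j ≤ k → k < i' → flexP (Lt u k) (Lt u (k+1)))) := by
    intro i
    induction i with
    | zero =>
        intro h0 i' hi'
        have hz : i' = 0 := by omega
        subst hz
        have hpin0 : PinP u 0 0 := Or.inl ⟨rfl, rfl⟩
        refine ⟨by simpa [ph_zero] using c4a (by omega), ?_, 0, le_refl 0, ⟨0, hpin0⟩, by omega⟩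
        intro p hp
        have := c3a 0 h0 p 0 hp hpin0
        simpa [ph_zero] using this
    | succ i IH =>
        intro hi1 i' hi'
        rcases Nat.lt_or_ge i' (i+1) with h | h
        · exact IH (by omega) i' (by omega)
        · have hi'eq : i' = i + 1 := by omega
          subst hi'eq
          have IH' := IH (by omega)
          obtain ⟨Hmem, Hpins, j, hj, ⟨pj, hpj⟩, hrun⟩ := IH' i (le_refl i)
          by_cases hflex : flexP (Lt u i) (Lt u (i+1))
          · -- flexible step
            have hrun' : ∀ k, j ≤ k → k < i+1 → flexP (Lt u k) (Lt u (k+1)) := by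
              intro k hk1 hk2
              rcases Nat.lt_or_ge k i with hk | hk
              · exact hrun k hk1 hk
              · have : k = i := by omega
                subst this; exact hflex
            have hpjval : pj = ph j := (IH' j hj).2.1 pj hpj
            have hmem1 : ph (i+1) ∈ Lt u (i+1) := by
              rw [ph_succ]; exact flex_step _ _ hflex _ Hmem
            obtain ⟨mj, hmj, _⟩ := hrun' j (le_refl j) (by omega)
            have hLt' : Lt u (i+1) = Dl (mj + ph (i+1-j)) := by
              have := flexrun_dl u j mj hmj (i+1-j)
                (fun k hk1 hk2 => hrun' k hk1 (by omega))
              rwa [show j + (i+1-j) = i+1 from by omega] at this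
            refine ⟨hmem1, ?_, j, by omega, ⟨pj, hpj⟩, hrun'⟩
            intro q hq
            have hrel := c3b j (i+1) (by omega) hi1 hrun' pj q mj (mj + ph (i+1-j))
              hpj hq hmj hLt'
            have hqv : q = pj + ph (i+1-j) := by
              apply add_right_cancel (b := mj)
              rw [hrel]; abel
            rw [hqv, hpjval, ← ph_add, show j + (i+1-j) = i+1 from by omega]
          · -- rigid step
            obtain ⟨p0, hp0a, hp0b⟩ := c1 i hi1
            have hp0pin : PinP u i p0 := Or.inr (Or.inr (Or.inl ⟨hi1, hflex, hp0a, hp0b⟩))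
            have hp0val : p0 = ph i := Hpins p0 hp0pin
            have hmem1 : ph (i+1) ∈ Lt u (i+1) := by
              rw [ph_succ, ← hp0val]; exact hp0b
            have hpin1 : PinP u (i+1) (ph (i+1)) := by
              refine Or.inr (Or.inr (Or.inr ⟨by omega, ?_, hmem1, ?_⟩))
              · simpa using hflex
              · have h2 : ph (i+1) + 2 = ph i := by rw [ph_succ, fin3_a]
                simpa [h2] using Hmem
            refine ⟨hmem1, ?_, i+1, le_refl _, ⟨ph (i+1), hpin1⟩, by omega⟩
            intro q hq
            exact c3a (i+1) hi1 q (ph (i+1)) hq hpin1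
  constructor
  · intro i hi
    rw [← Lt_eq u i hi]
    exact (G i hi i (le_refl i)).1
  · rcases Nat.eq_zero_or_pos n with h | h
    · omega
    · have hpin := (G (n-1) (by omega) (n-1) (le_refl _)).2.1 2 (Or.inr (Or.inl ⟨rfl, rfl⟩))
      have hv : (2 : ℕ) = (n-1) % 3 := congrArg Fin.val hpin
      omega

lemma imp_cond (u : List AB) (htop : top3 ∉ u)
    (halive : ∀ i (hi : i < u.length), ph i ∈ u[i]) (hlen : u.length % 3 = 0) : Cond u := by
  set n := u.length with hn
  have hal : ∀ i, i < n → ph i ∈ Lt u i := fun i hi => (Lt_eq u i hi) ▸ halive i hi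
  have hnot : ∀ i, i < n → Lt u i ≠ top3 := by
    intro i hi hcontra
    exact htop (hcontra ▸ ((Lt_eq u i hi) ▸ List.getElem_mem hi))
  have hsucc : ∀ i, i + 1 < n → ph i + 1 ∈ Lt u (i+1) := by
    intro i h
    rw [← ph_succ]; exact hal (i+1) h
  have hpin : ∀ i, i < n → ∀ p, PinP u i p → p = ph i := by
    intro i hi p hp
    rcases hp with ⟨hi0, rfl⟩ | ⟨hi0, rfl⟩ | ⟨h1, h2, h3, h4⟩ | ⟨h1, h2, h3, h4⟩
    · subst hi0; exact ph_zero.symm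
    · subst hi0
      apply Fin.ext
      show (2 : ℕ) = (n - 1) % 3
      omega
    · rcases twopair (Lt u i) (Lt u (i+1)) (hnot i hi) (hnot (i+1) h1) p (ph i)
        h3 h4 (hal i hi) (hsucc i h1) with h | h
      · exact h
      · exact absurd h h2
    · have him : i - 1 < n := by omega
      have heq : i - 1 + 1 = i := by omega
      have hri : ph (i-1) + 1 = ph i := by rw [← ph_succ, heq]
      rcases twopair (Lt u (i-1)) (Lt u i) (hnot (i-1) him) (hnot i hi) (p + 2) (ph (i-1))
        h4 (by rw [fin3_b]; exact h3) (hal (i-1) him) (by rw [hri]; exact hal i hi) with h | h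
      · rw [← hri, ← h, fin3_b]
      · exact absurd h h2
  refine ⟨?_, ?_, ?_, ?_, ?_⟩
  · intro i h
    exact ⟨ph i, hal i (by omega), hsucc i h⟩
  · intro h
    simpa [ph_zero] using hal 0 h
  · intro h
    have h2 : ph (n-1) = 2 := by
      apply Fin.ext
      show (n-1) % 3 = (2:ℕ)
      omega
    have := hal (n-1) (by omega)
    rwa [h2] at this
  · intro i hi p q hp hq
    rw [hpin i hi p hp, hpin i hi q hq]
  · intro i j hij hj hrun p q m1 m2 hp hq hm1 hm2
    obtain ⟨d, rfl⟩ : ∃ d, j = i + d := ⟨j - i, by omega⟩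
    have hpv := hpin i (by omega) p hp
    have hqv := hpin (i+d) hj q hq
    have hdl := flexrun_dl u i m1 hm1 d (fun k hk1 hk2 => hrun k hk1 (by omega))
    have hm2v : m2 = m1 + ph d := Dl_inj _ _ (hm2.symm.trans hdl)
    rw [hqv, hpv, hm2v, ph_add]
    abel

-- ====== Section: FO encoding, basic pieces ======

def fFalse : FOf AB := FOf.lt 0 0
def fTrue : FOf AB := FOf.not fFalse
def fImp (φ ψ : FOf AB) : FOf AB := FOf.or (FOf.not φ) ψ
def bigOr (l : List (FOf AB)) : FOf AB := l.foldr FOf.or fFalse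
def bigAnd (l : List (FOf AB)) : FOf AB := l.foldr FOf.and fTrue

section SatLemmas
variable {u : List AB} {α : ℕ → ℕ}

lemma sat_fFalse : ¬ FOf.Sat u α fFalse := by simp [fFalse, FOf.Sat]

lemma sat_fTrue : FOf.Sat u α fTrue := by simp [fTrue, fFalse, FOf.Sat]

lemma sat_fImp {φ ψ : FOf AB} :
    FOf.Sat u α (fImp φ ψ) ↔ (FOf.Sat u α φ → FOf.Sat u α ψ) := by
  simp [fImp, FOf.Sat]; tauto

lemma sat_bigOr {l : List (FOf AB)} :
    FOf.Sat u α (bigOr l) ↔ ∃ φ ∈ l, FOf.Sat u α φ := by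
  induction l with
  | nil => simpa [bigOr] using sat_fFalse
  | cons a l ih =>
      show FOf.Sat u α (FOf.or a (bigOr l)) ↔ _
      simp only [FOf.Sat, ih, List.mem_cons]
      constructor
      · rintro (h | ⟨φ, h1, h2⟩)
        · exact ⟨a, Or.inl rfl, h⟩
        · exact ⟨φ, Or.inr h1, h2⟩
      · rintro ⟨φ, (rfl | h1), h2⟩
        · exact Or.inl h2
        · exact Or.inr ⟨φ, h1, h2⟩

lemma sat_bigAnd {l : List (FOf AB)} :
    FOf.Sat u α (bigAnd l) ↔ ∀ φ ∈ l, FOf.Sat u α φ := by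
  induction l with
  | nil => simp [bigAnd, sat_fTrue]
  | cons a l ih =>
      show FOf.Sat u α (FOf.and a (bigAnd l)) ↔ _
      simp only [FOf.Sat, ih, List.mem_cons]
      constructor
      · rintro ⟨h1, h2⟩ φ (rfl | h)
        · exact h1
        · exact h2 φ h
      · intro h
        exact ⟨h a (Or.inl rfl), fun φ hφ => h φ (Or.inr hφ)⟩

lemma sat_letter {s : AB} {x : ℕ} :
    FOf.Sat u α (FOf.letter s x) ↔ (α x < u.length ∧ Lt u (α x) = s) := by
  show u[α x]? = some s ↔ _
  rw [List.getElem?_eq_some_iff]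
  constructor
  · rintro ⟨h, rfl⟩; exact ⟨h, Lt_eq u _ h⟩
  · rintro ⟨h, hs⟩; exact ⟨h, by rw [← Lt_eq u _ h, hs]⟩

def allAB : List AB := [∅, {0}, {1}, {2}, {0,1}, {0,2}, {1,2}, Finset.univ]

lemma mem_allAB : ∀ s : AB, s ∈ allAB := by decide

def memF (e : Fin 3) (x : ℕ) : FOf AB :=
  bigOr ((allAB.filter (fun s => e ∈ s)).map (fun s => FOf.letter s x))

lemma sat_memF {e : Fin 3} {x : ℕ} :
    FOf.Sat u α (memF e x) ↔ (α x < u.length ∧ e ∈ Lt u (α x)) := by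
  rw [memF, sat_bigOr]
  constructor
  · rintro ⟨φ, hφ, hsat⟩
    simp only [List.mem_map, List.mem_filter] at hφ
    obtain ⟨s, ⟨_, hes⟩, rfl⟩ := hφ
    obtain ⟨h1, h2⟩ := sat_letter.1 hsat
    refine ⟨h1, h2 ▸ (by simpa using hes)⟩
  · rintro ⟨h1, h2⟩
    refine ⟨FOf.letter (Lt u (α x)) x, ?_, sat_letter.2 ⟨h1, rfl⟩⟩
    simp only [List.mem_map, List.mem_filter]
    exact ⟨Lt u (α x), ⟨mem_allAB _, by simpa using h2⟩, rfl⟩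

def flexF (x y : ℕ) : FOf AB :=
  bigOr ((List.finRange 3).map
    (fun m => FOf.and (FOf.letter (Dl m) x) (FOf.letter (Dl (m+1)) y)))

lemma sat_flexF {x y : ℕ} :
    FOf.Sat u α (flexF x y) ↔
      (α x < u.length ∧ α y < u.length ∧ flexP (Lt u (α x)) (Lt u (α y))) := by
  rw [flexF, sat_bigOr]
  constructor
  · rintro ⟨φ, hφ, hsat⟩
    simp only [List.mem_map, List.mem_finRange, true_and] at hφ
    obtain ⟨m, rfl⟩ := hφ
    obtain ⟨ha, hb⟩ := hsat
    have ha' := sat_letter.1 ha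
    have hb' := sat_letter.1 hb
    exact ⟨ha'.1, hb'.1, m, ha'.2, hb'.2⟩
  · rintro ⟨h1, h2, m, hm1, hm2⟩
    refine ⟨FOf.and (FOf.letter (Dl m) x) (FOf.letter (Dl (m+1)) y), ?_, ?_⟩
    · simp only [List.mem_map, List.mem_finRange, true_and]
      exact ⟨m, rfl⟩
    · exact ⟨sat_letter.2 ⟨h1, hm1⟩, sat_letter.2 ⟨h2, hm2⟩⟩

def succF (x y z : ℕ) : FOf AB :=
  FOf.and (FOf.lt x y) (FOf.not (FOf.ex z (FOf.and (FOf.lt x z) (FOf.lt z y))))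

lemma sat_succF {x y z : ℕ} (hxz : x ≠ z) (hyz : y ≠ z) (hy : α y < u.length) :
    FOf.Sat u α (succF x y z) ↔ α y = α x + 1 := by
  simp only [succF, FOf.Sat, Function.update_apply, if_neg hxz, if_neg hyz, if_pos]
  constructor
  · rintro ⟨h1, h2⟩
    by_contra hne
    exact h2 ⟨α x + 1, by omega, by omega, by omega⟩
  · rintro h
    refine ⟨by omega, ?_⟩
    rintro ⟨i, _, h3, h4⟩
    omega

def firstF (x z : ℕ) : FOf AB := FOf.not (FOf.ex z (FOf.lt z x))

lemma sat_firstF {x z : ℕ} (hxz : x ≠ z) (hx : α x < u.length) :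
    FOf.Sat u α (firstF x z) ↔ α x = 0 := by
  simp only [firstF, FOf.Sat, Function.update_apply, if_neg hxz, if_pos]
  constructor
  · intro h
    by_contra hne
    exact h ⟨0, by omega, by omega⟩
  · rintro h ⟨i, _, h2⟩
    omega

def lastF (x z : ℕ) : FOf AB := FOf.not (FOf.ex z (FOf.lt x z))

lemma sat_lastF {x z : ℕ} (hxz : x ≠ z) (hx : α x < u.length) :
    FOf.Sat u α (lastF x z) ↔ α x = u.length - 1 := by
  simp only [lastF, FOf.Sat, Function.update_apply, if_neg hxz, if_pos]
  constructor
  · intro h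
    by_contra hne
    exact h ⟨α x + 1, by omega, by omega⟩
  · rintro h ⟨i, hi, h2⟩
    omega

end SatLemmas
section PinFormula
variable {u : List AB} {α : ℕ → ℕ}

lemma sat_or {φ ψ : FOf AB} :
    FOf.Sat u α (FOf.or φ ψ) ↔ (FOf.Sat u α φ ∨ FOf.Sat u α ψ) := Iff.rfl

def pinF (p : Fin 3) (x : ℕ) : FOf AB :=
  FOf.or (if p = 0 then firstF x 2 else fFalse)
  (FOf.or (if p = 2 then lastF x 2 else fFalse)
  (FOf.or (FOf.ex 2 (FOf.and (succF x 2 3)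
            (FOf.and (FOf.not (flexF x 2)) (FOf.and (memF p x) (memF (p+1) 2)))))
          (FOf.ex 2 (FOf.and (succF 2 x 3)
            (FOf.and (FOf.not (flexF 2 x)) (FOf.and (memF p x) (memF (p+2) 2)))))))

lemma sat_pinR {p : Fin 3} {x : ℕ} (hx2 : x ≠ 2) (hx3 : x ≠ 3) :
    FOf.Sat u α (FOf.ex 2 (FOf.and (succF x 2 3)
      (FOf.and (FOf.not (flexF x 2)) (FOf.and (memF p x) (memF (p+1) 2))))) ↔
    (α x + 1 < u.length ∧ ¬ flexP (Lt u (α x)) (Lt u (α x + 1)) ∧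
      p ∈ Lt u (α x) ∧ p + 1 ∈ Lt u (α x + 1)) := by
  constructor
  · rintro ⟨i, hi, hsucc, hnflex, hm1, hm2⟩
    have hαx : Function.update α 2 i x = α x := Function.update_of_ne hx2 _ _
    have hα2 : Function.update α 2 i 2 = i := Function.update_self _ _ _
    have hieq : i = α x + 1 := by
      have h := (sat_succF (u := u) (α := Function.update α 2 i) (x := x) (y := 2) (z := 3)
        hx3 (by decide) (by rw [hα2]; exact hi)).1 hsucc
      rw [hα2, hαx] at h; exact h
    subst hieq
    have hm1' := sat_memF.1 hm1
    have hm2' := sat_memF.1 hm2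
    rw [hαx] at hm1'
    rw [hα2] at hm2'
    refine ⟨hi, ?_, hm1'.2, hm2'.2⟩
    intro hf
    exact hnflex (sat_flexF.2 ⟨by rw [hαx]; omega, by rw [hα2]; exact hi,
      by rw [hαx, hα2]; exact hf⟩)
  · rintro ⟨h1, h2, h3, h4⟩
    have hβx : Function.update α 2 (α x + 1) x = α x := Function.update_of_ne hx2 _ _
    have hβ2 : Function.update α 2 (α x + 1) 2 = α x + 1 := Function.update_self _ _ _
    refine ⟨α x + 1, h1, ?_, ?_, ?_, ?_⟩
    · exact (sat_succF hx3 (by decide) (by rw [hβ2]; exact h1)).2 (by rw [hβ2, hβx])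
    · intro hf
      have := sat_flexF.1 hf
      rw [hβx, hβ2] at this
      exact h2 this.2.2
    · exact sat_memF.2 ⟨by rw [hβx]; omega, by rw [hβx]; exact h3⟩
    · exact sat_memF.2 ⟨by rw [hβ2]; exact h1, by rw [hβ2]; exact h4⟩

lemma sat_pinL {p : Fin 3} {x : ℕ} (hx2 : x ≠ 2) (hx3 : x ≠ 3) (hx : α x < u.length) :
    FOf.Sat u α (FOf.ex 2 (FOf.and (succF 2 x 3)
      (FOf.and (FOf.not (flexF 2 x)) (FOf.and (memF p x) (memF (p+2) 2))))) ↔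
    (1 ≤ α x ∧ ¬ flexP (Lt u (α x - 1)) (Lt u (α x)) ∧
      p ∈ Lt u (α x) ∧ p + 2 ∈ Lt u (α x - 1)) := by
  constructor
  · rintro ⟨i, hi, hsucc, hnflex, hm1, hm2⟩
    have hαx : Function.update α 2 i x = α x := Function.update_of_ne hx2 _ _
    have hα2 : Function.update α 2 i 2 = i := Function.update_self _ _ _
    have hieq : α x = i + 1 := by
      have h := (sat_succF (u := u) (α := Function.update α 2 i) (x := 2) (y := x) (z := 3)
        (by decide) hx3 (by rw [hαx]; exact hx)).1 hsucc
      rw [hα2, hαx] at h; exact h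
    have hieq' : i = α x - 1 := by omega
    subst hieq'
    have hm1' := sat_memF.1 hm1
    have hm2' := sat_memF.1 hm2
    rw [hαx] at hm1'
    rw [hα2] at hm2'
    refine ⟨by omega, ?_, hm1'.2, hm2'.2⟩
    intro hf
    exact hnflex (sat_flexF.2 ⟨by rw [hα2]; exact hi, by rw [hαx]; exact hx,
      by rw [hαx, hα2]; exact hf⟩)
  · rintro ⟨h1, h2, h3, h4⟩
    have hβx : Function.update α 2 (α x - 1) x = α x := Function.update_of_ne hx2 _ _
    have hβ2 : Function.update α 2 (α x - 1) 2 = α x - 1 := Function.update_self _ _ _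
    refine ⟨α x - 1, by omega, ?_, ?_, ?_, ?_⟩
    · exact (sat_succF (by decide) hx3 (by rw [hβx]; exact hx)).2 (by rw [hβ2, hβx]; omega)
    · intro hf
      have := sat_flexF.1 hf
      rw [hβx, hβ2] at this
      exact h2 this.2.2
    · exact sat_memF.2 ⟨by rw [hβx]; exact hx, by rw [hβx]; exact h3⟩
    · exact sat_memF.2 ⟨by rw [hβ2]; omega, by rw [hβ2]; exact h4⟩

lemma sat_pinF {p : Fin 3} {x : ℕ} (hx2 : x ≠ 2) (hx3 : x ≠ 3) (hx : α x < u.length) :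
    FOf.Sat u α (pinF p x) ↔ PinP u (α x) p := by
  have hA : FOf.Sat u α (if p = 0 then firstF x 2 else fFalse) ↔ (α x = 0 ∧ p = 0) := by
    split_ifs with h
    · rw [sat_firstF hx2 hx]; simp [h]
    · exact iff_of_false sat_fFalse (fun hc => h hc.2)
  have hB : FOf.Sat u α (if p = 2 then lastF x 2 else fFalse) ↔
      (α x = u.length - 1 ∧ p = 2) := by
    split_ifs with h
    · rw [sat_lastF hx2 hx]; simp [h]
    · exact iff_of_false sat_fFalse (fun hc => h hc.2)
  rw [pinF, sat_or, sat_or, sat_or, hA, hB, sat_pinR hx2 hx3, sat_pinL hx2 hx3 hx]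
  unfold PinP
  exact Iff.rfl

end PinFormula
section CondFormulas
variable {u : List AB} {α : ℕ → ℕ}

def c1F : FOf AB :=
  FOf.all 0 (FOf.all 1 (fImp (succF 0 1 2)
    (bigOr ((List.finRange 3).map (fun p => FOf.and (memF p 0) (memF (p+1) 1))))))

lemma sat_c1F : FOf.Sat u α c1F ↔
    (∀ i, i + 1 < u.length → ∃ p : Fin 3, p ∈ Lt u i ∧ p + 1 ∈ Lt u (i+1)) := by
  constructor
  · intro h i hi
    have h1 := h i (by omega) (i+1) hi
    rw [sat_fImp] at h1
    have hβ0 : Function.update (Function.update α 0 i) 1 (i+1) 0 = i := by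
      rw [Function.update_of_ne (by decide : (0:ℕ) ≠ 1)]
      exact Function.update_self _ _ _
    have hβ1 : Function.update (Function.update α 0 i) 1 (i+1) 1 = i + 1 :=
      Function.update_self _ _ _
    have h2 := h1 ((sat_succF (by decide) (by decide) (by rw [hβ1]; exact hi)).2
      (by rw [hβ0, hβ1]))
    rw [sat_bigOr] at h2
    obtain ⟨φ, hφ, hsat⟩ := h2
    simp only [List.mem_map, List.mem_finRange, true_and] at hφ
    obtain ⟨m, rfl⟩ := hφ
    obtain ⟨ha, hb⟩ := hsat
    have ha' := sat_memF.1 ha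
    have hb' := sat_memF.1 hb
    rw [hβ0] at ha'
    rw [hβ1] at hb'
    exact ⟨m, ha'.2, hb'.2⟩
  · intro h i hi j hj
    rw [sat_fImp]
    intro hsucc
    have hβ0 : Function.update (Function.update α 0 i) 1 j 0 = i := by
      rw [Function.update_of_ne (by decide : (0:ℕ) ≠ 1)]
      exact Function.update_self _ _ _
    have hβ1 : Function.update (Function.update α 0 i) 1 j 1 = j :=
      Function.update_self _ _ _
    have hji : j = i + 1 := by
      have := (sat_succF (by decide) (by decide) (by rw [hβ1]; exact hj)).1 hsucc
      rw [hβ0, hβ1] at this; exact this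
    subst hji
    obtain ⟨m, hm1, hm2⟩ := h i hj
    rw [sat_bigOr]
    refine ⟨FOf.and (memF m 0) (memF (m+1) 1), ?_, ?_, ?_⟩
    · simp only [List.mem_map, List.mem_finRange, true_and]
      exact ⟨m, rfl⟩
    · exact sat_memF.2 ⟨by rw [hβ0]; omega, by rw [hβ0]; exact hm1⟩
    · exact sat_memF.2 ⟨by rw [hβ1]; exact hj, by rw [hβ1]; exact hm2⟩

def c4aF : FOf AB := FOf.all 0 (fImp (firstF 0 2) (memF 0 0))

lemma sat_c4aF : FOf.Sat u α c4aF ↔ (0 < u.length → (0 : Fin 3) ∈ Lt u 0) := by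
  constructor
  · intro h hn
    have h1 := h 0 hn
    rw [sat_fImp] at h1
    have hβ : Function.update α 0 0 0 = 0 := Function.update_self _ _ _
    have h2 := h1 ((sat_firstF (by decide) (by rw [hβ]; exact hn)).2 hβ)
    have := sat_memF.1 h2
    rw [hβ] at this
    exact this.2
  · intro h i hi
    rw [sat_fImp]
    intro hfirst
    have hβ : Function.update α 0 i 0 = i := Function.update_self _ _ _
    have hi0 : i = 0 := by
      have := (sat_firstF (by decide) (by rw [hβ]; exact hi)).1 hfirst
      rw [hβ] at this; exact this
    subst hi0
    exact sat_memF.2 ⟨by rw [hβ]; exact hi, by rw [hβ]; exact h (by omega)⟩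

def c4bF : FOf AB := FOf.all 0 (fImp (lastF 0 2) (memF 2 0))

lemma sat_c4bF : FOf.Sat u α c4bF ↔ (0 < u.length → (2 : Fin 3) ∈ Lt u (u.length - 1)) := by
  constructor
  · intro h hn
    have h1 := h (u.length - 1) (by omega)
    rw [sat_fImp] at h1
    have hβ : Function.update α 0 (u.length - 1) 0 = u.length - 1 :=
      Function.update_self _ _ _
    have h2 := h1 ((sat_lastF (by decide) (by rw [hβ]; omega)).2 (by rw [hβ]))
    have := sat_memF.1 h2
    rw [hβ] at this
    exact this.2
  · intro h i hi
    rw [sat_fImp]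
    intro hlast
    have hβ : Function.update α 0 i 0 = i := Function.update_self _ _ _
    have hi0 : i = u.length - 1 := by
      have := (sat_lastF (by decide) (by rw [hβ]; exact hi)).1 hlast
      rw [hβ] at this; exact this
    subst hi0
    exact sat_memF.2 ⟨by rw [hβ]; exact hi, by rw [hβ]; exact h (by omega)⟩

def pairs9 : List (Fin 3 × Fin 3) := (List.finRange 3) ×ˢ (List.finRange 3)

lemma mem_pairs9 : ∀ v : Fin 3 × Fin 3, v ∈ pairs9 := by decide

def c3aF : FOf AB :=
  FOf.all 0 (bigAnd (pairs9.map (fun pq =>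
    if pq.1 = pq.2 then fTrue
    else FOf.not (FOf.and (pinF pq.1 0) (pinF pq.2 0)))))

lemma sat_c3aF : FOf.Sat u α c3aF ↔
    (∀ i, i < u.length → ∀ p q : Fin 3, PinP u i p → PinP u i q → p = q) := by
  constructor
  · intro h i hi p q hp hq
    have h1 := h i hi
    rw [sat_bigAnd] at h1
    have h2 : FOf.Sat u (Function.update α 0 i)
        (if p = q then fTrue else FOf.not (FOf.and (pinF p 0) (pinF q 0))) :=
      h1 _ (List.mem_map.2 ⟨(p, q), mem_pairs9 _, rfl⟩)
    by_contra hne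
    rw [if_neg hne] at h2
    have hβ : Function.update α 0 i 0 = i := Function.update_self _ _ _
    exact h2 ⟨(sat_pinF (by decide) (by decide) (by rw [hβ]; exact hi)).2
        (by rw [hβ]; exact hp),
      (sat_pinF (by decide) (by decide) (by rw [hβ]; exact hi)).2 (by rw [hβ]; exact hq)⟩
  · intro h i hi
    rw [sat_bigAnd]
    intro φ hφ
    obtain ⟨⟨p, q⟩, _, rfl⟩ := List.mem_map.1 hφ
    dsimp only
    by_cases hpq : p = q
    · rw [if_pos hpq]; exact sat_fTrue
    · rw [if_neg hpq]
      intro hc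
      obtain ⟨h1, h2⟩ := hc
      have hβ : Function.update α 0 i 0 = i := Function.update_self _ _ _
      have hp := (sat_pinF (by decide) (by decide) (by rw [hβ]; exact hi)).1 h1
      have hq := (sat_pinF (by decide) (by decide) (by rw [hβ]; exact hi)).1 h2
      rw [hβ] at hp hq
      exact hpq (h i hi p q hp hq)

end CondFormulas

section FinalFormulas
variable {u : List AB} {α : ℕ → ℕ}

def intFlexF : FOf AB :=
  FOf.all 2 (FOf.all 3 (fImp (FOf.and (succF 2 3 4) (FOf.and (FOf.le 0 2) (FOf.le 3 1)))
    (flexF 2 3)))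

lemma sat_intFlexF (hj : α 1 < u.length) :
    FOf.Sat u α intFlexF ↔
      (∀ k, α 0 ≤ k → k < α 1 → flexP (Lt u k) (Lt u (k+1))) := by
  have hup : ∀ k2 k3 : ℕ,
      (Function.update (Function.update α 2 k2) 3 k3) 0 = α 0 ∧
      (Function.update (Function.update α 2 k2) 3 k3) 1 = α 1 ∧
      (Function.update (Function.update α 2 k2) 3 k3) 2 = k2 ∧
      (Function.update (Function.update α 2 k2) 3 k3) 3 = k3 := by
    intro k2 k3
    refine ⟨?_, ?_, ?_, ?_⟩
    · rw [Function.update_of_ne (by decide : (0:ℕ) ≠ 3),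
        Function.update_of_ne (by decide : (0:ℕ) ≠ 2)]
    · rw [Function.update_of_ne (by decide : (1:ℕ) ≠ 3),
        Function.update_of_ne (by decide : (1:ℕ) ≠ 2)]
    · rw [Function.update_of_ne (by decide : (2:ℕ) ≠ 3)]
      exact Function.update_self _ _ _
    · exact Function.update_self _ _ _
  constructor
  · intro h k hk1 hk2
    obtain ⟨hγ0, hγ1, hγ2, hγ3⟩ := hup k (k+1)
    have h1 := h k (by omega) (k+1) (by omega)
    rw [sat_fImp] at h1
    have h2 := h1 ⟨(sat_succF (by decide) (by decide) (by rw [hγ3]; omega)).2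
        (by rw [hγ2, hγ3]),
      show _ ≤ _ by rw [hγ0, hγ2]; exact hk1,
      show _ ≤ _ by rw [hγ3, hγ1]; omega⟩
    have hf := sat_flexF.1 h2
    rw [hγ2, hγ3] at hf
    exact hf.2.2
  · intro h k2 hk2 k3 hk3
    rw [sat_fImp]
    rintro ⟨hsucc, hle1, hle2⟩
    obtain ⟨hγ0, hγ1, hγ2, hγ3⟩ := hup k2 k3
    have h32 : k3 = k2 + 1 := by
      have := (sat_succF (by decide) (by decide) (by rw [hγ3]; exact hk3)).1 hsucc
      rw [hγ2, hγ3] at this; exact this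
    have hle1' : α 0 ≤ k2 := by
      have : _ ≤ _ := hle1
      rwa [hγ0, hγ2] at this
    have hle2' : k3 ≤ α 1 := by
      have : _ ≤ _ := hle2
      rwa [hγ3, hγ1] at this
    subst h32
    exact sat_flexF.2 ⟨by rw [hγ2]; exact hk2, by rw [hγ3]; exact hk3,
      by rw [hγ2, hγ3]; exact h k2 hle1' (by omega)⟩

def quads : List (Fin 3 × Fin 3 × Fin 3 × Fin 3) :=
  (List.finRange 3) ×ˢ ((List.finRange 3) ×ˢ ((List.finRange 3) ×ˢ (List.finRange 3)))

lemma mem_quads : ∀ v : Fin 3 × Fin 3 × Fin 3 × Fin 3, v ∈ quads := by decide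

def relF : FOf AB :=
  bigAnd (quads.map (fun v =>
    if v.2.2.1 + v.2.1 = v.1 + v.2.2.2 then fTrue
    else FOf.not (FOf.and (pinF v.1 0) (FOf.and (FOf.letter (Dl v.2.1) 0)
      (FOf.and (pinF v.2.2.1 1) (FOf.letter (Dl v.2.2.2) 1))))))

lemma sat_relF (hi : α 0 < u.length) (hj : α 1 < u.length) :
    FOf.Sat u α relF ↔ (∀ p q m1 m2 : Fin 3, PinP u (α 0) p → PinP u (α 1) q →
      Lt u (α 0) = Dl m1 → Lt u (α 1) = Dl m2 → q + m1 = p + m2) := by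
  unfold relF
  constructor
  · intro h p q m1 m2 hp hq hm1 hm2
    rw [sat_bigAnd] at h
    have h2 : FOf.Sat u α (if q + m1 = p + m2 then fTrue
        else FOf.not (FOf.and (pinF p 0) (FOf.and (FOf.letter (Dl m1) 0)
          (FOf.and (pinF q 1) (FOf.letter (Dl m2) 1))))) :=
      h _ (List.mem_map.2 ⟨(p, m1, q, m2), mem_quads _, rfl⟩)
    by_contra hne
    rw [if_neg hne] at h2
    exact h2 ⟨(sat_pinF (by decide) (by decide) hi).2 hp,
      sat_letter.2 ⟨hi, hm1⟩, (sat_pinF (by decide) (by decide) hj).2 hq,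
      sat_letter.2 ⟨hj, hm2⟩⟩
  · intro h
    rw [sat_bigAnd]
    intro φ hφ
    obtain ⟨⟨p, m1, q, m2⟩, _, rfl⟩ := List.mem_map.1 hφ
    dsimp only
    by_cases he : q + m1 = p + m2
    · rw [if_pos he]; exact sat_fTrue
    · rw [if_neg he]
      rintro ⟨h1, h2, h3, h4⟩
      exact he (h p q m1 m2 ((sat_pinF (by decide) (by decide) hi).1 h1)
        ((sat_pinF (by decide) (by decide) hj).1 h3)
        (sat_letter.1 h2).2 (sat_letter.1 h4).2)

def c3bF : FOf AB := FOf.all 0 (FOf.all 1 (fImp (FOf.and (FOf.lt 0 1) intFlexF) relF))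

lemma sat_c3bF : FOf.Sat u α c3bF ↔ (∀ i j, i < j → j < u.length →
    (∀ k, i ≤ k → k < j → flexP (Lt u k) (Lt u (k+1))) →
    ∀ p q m1 m2 : Fin 3, PinP u i p → PinP u j q →
      Lt u i = Dl m1 → Lt u j = Dl m2 → q + m1 = p + m2) := by
  have hup : ∀ i j : ℕ,
      (Function.update (Function.update α 0 i) 1 j) 0 = i ∧
      (Function.update (Function.update α 0 i) 1 j) 1 = j := by
    intro i j
    constructor
    · rw [Function.update_of_ne (by decide : (0:ℕ) ≠ 1)]
      exact Function.update_self _ _ _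
    · exact Function.update_self _ _ _
  constructor
  · intro h i j hij hj hrun
    obtain ⟨hβ0, hβ1⟩ := hup i j
    have h1 := h i (by omega) j hj
    rw [sat_fImp] at h1
    have h2 := h1 ⟨show _ < _ by rw [hβ0, hβ1]; exact hij,
      (sat_intFlexF (by rw [hβ1]; exact hj)).2 (by rw [hβ0, hβ1]; exact hrun)⟩
    have h3 := (sat_relF (by rw [hβ0]; omega) (by rw [hβ1]; exact hj)).1 h2
    rw [hβ0, hβ1] at h3
    exact h3
  · intro h i hi j hj
    rw [sat_fImp]
    rintro ⟨hlt, hflex⟩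
    obtain ⟨hβ0, hβ1⟩ := hup i j
    have hij : i < j := by
      have : _ < _ := hlt
      rwa [hβ0, hβ1] at this
    apply (sat_relF (by rw [hβ0]; omega) (by rw [hβ1]; exact hj)).2
    rw [hβ0, hβ1]
    refine h i j hij hj ?_
    have := (sat_intFlexF (by rw [hβ1]; exact hj)).1 hflex
    rwa [hβ0, hβ1] at this

def topF : FOf AB := FOf.ex 0 (FOf.letter top3 0)

lemma sat_topF : FOf.Sat u α topF ↔ top3 ∈ u := by
  constructor
  · rintro ⟨i, hi, hsat⟩
    have := sat_letter.1 hsat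
    rw [Function.update_self] at this
    rw [← this.2, Lt_eq u i this.1]
    exact List.getElem_mem this.1
  · intro h
    obtain ⟨i, hi, hgi⟩ := List.getElem_of_mem h
    exact ⟨i, hi, sat_letter.2 ⟨by rw [Function.update_self]; exact hi,
      by rw [Function.update_self, Lt_eq u i hi]; exact hgi⟩⟩

def condF : FOf AB := FOf.and c1F (FOf.and c4aF (FOf.and c4bF (FOf.and c3aF c3bF)))

lemma sat_condF : FOf.Sat u α condF ↔ Cond u := by
  constructor
  · rintro ⟨h1, h2, h3, h4, h5⟩
    exact ⟨sat_c1F.1 h1, sat_c4aF.1 h2, sat_c4bF.1 h3, sat_c3aF.1 h4, sat_c3bF.1 h5⟩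
  · rintro ⟨h1, h2, h3, h4, h5⟩
    exact ⟨sat_c1F.2 h1, sat_c4aF.2 h2, sat_c4bF.2 h3, sat_c3aF.2 h4, sat_c3bF.2 h5⟩

def phiK : FOf AB := FOf.or topF condF

end FinalFormulas

set_option maxHeartbeats 4000000 in
set_option maxRecDepth 100000 in
lemma fv_phiK : phiK.fv = ∅ := by decide

lemma part3 : FODefinable K := by
  refine ⟨phiK, fv_phiK, ?_⟩
  ext u
  show u ∈ K ↔ FOf.Sat u (fun _ => 0) phiK
  have hphi : FOf.Sat u (fun _ => 0) phiK ↔ (top3 ∈ u ∨ Cond u) := by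
    unfold phiK
    rw [sat_or, sat_topF, sat_condF]
  rw [hphi]
  by_cases ht : top3 ∈ u
  · exact iff_of_true (Or.inr ht) (Or.inl ht)
  · have hK : u ∈ K ↔ KBlocks u := by
      simp [K, ht]
    rw [hK]
    constructor
    · intro hb
      obtain ⟨h1, h2⟩ := kblocks_alive hb
      exact Or.inr (imp_cond u ht h1 h2)
    · rintro (h | h)
      · exact absurd h ht
      · obtain ⟨h1, h2⟩ := cond_imp u ht h
        exact kblocks_of u h1 h2


theorem K_dfa_counterFree_FO :
    (∀ u : List AB, u ∈ K ↔ (dfaRun St.qa u = St.qa ∨ dfaRun St.qa u = St.qtop)) ∧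
    (¬ ∃ (u : List AB) (p q : St) (k : ℕ), 1 ≤ k ∧ p ≠ q ∧
        dfaRun p u = q ∧ dfaRun q (wpow u k) = p) ∧
    FODefinable K := by
  exact ⟨part1, part2, part3⟩
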